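/- For density operators ρ and ξ on a finite-dimensional complex inner product space, 1 − (1/2)‖ρ − ξ‖₁ ≤ F(ρ, ξ) ≤ √(1 − (1/4)‖ρ − ξ‖₁²), where F(ρ, ξ) = ‖√ρ √ξ‖₁ is the fidelity and ‖·‖₁ is the trace norm. -/

import Mathlib

open Matrix
open scoped Matrix.Norms.L2Operator Kronecker ComplexOrder

open scoped Classical in
noncomputable def psqrt {n : ℕ} (A : Matrix (Fin n) (Fin n) ℂ) : Matrix (Fin n) (Fin n) ℂ :=
  if h : A.PosSemidef then
    (h.1.eigenvectorUnitary : Matrix (Fin n) (Fin n) ℂ) *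
      diagonal ((↑) ∘ (√·) ∘ h.1.eigenvalues) *
      (star h.1.eigenvectorUnitary : Matrix (Fin n) (Fin n) ℂ)
  else 0

noncomputable def traceNorm {n : ℕ} (X : Matrix (Fin n) (Fin n) ℂ) : ℝ :=
  ((psqrt (Xᴴ * X)).trace).re

noncomputable def fid {n : ℕ} (P Q : Matrix (Fin n) (Fin n) ℂ) : ℝ :=
  traceNorm (psqrt P * psqrt Q)


namespace FvdG

variable {n : ℕ}

/-- Functional calculus for a Hermitian matrix. -/
noncomputable def fc (f : ℝ → ℝ) {H : Matrix (Fin n) (Fin n) ℂ} (hH : H.IsHermitian) :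
    Matrix (Fin n) (Fin n) ℂ :=
  (hH.eigenvectorUnitary : Matrix (Fin n) (Fin n) ℂ) *
    diagonal (RCLike.ofReal ∘ f ∘ hH.eigenvalues) *
    (star (hH.eigenvectorUnitary : Matrix (Fin n) (Fin n) ℂ))

section fcsec

variable {H : Matrix (Fin n) (Fin n) ℂ} (hH : H.IsHermitian) (f g : ℝ → ℝ)

lemma fc_mul : fc f hH * fc g hH = fc (fun x => f x * g x) hH := by
  have h1 : (star (hH.eigenvectorUnitary : Matrix (Fin n) (Fin n) ℂ)) *
      (hH.eigenvectorUnitary : Matrix (Fin n) (Fin n) ℂ) = 1 :=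
    Matrix.mem_unitaryGroup_iff'.mp (hH.eigenvectorUnitary).2
  unfold fc
  rw [show ∀ (U D1 D2 V : Matrix (Fin n) (Fin n) ℂ),
      U * D1 * V * (U * D2 * V) = U * (D1 * (V * U) * D2) * V from fun _ _ _ _ => by
        noncomm_ring, h1, mul_one, diagonal_mul_diagonal]
  congr 1
  congr 1
  apply congrArg diagonal
  funext x
  simp

lemma fc_congr {f g : ℝ → ℝ} (h : ∀ i, f (hH.eigenvalues i) = g (hH.eigenvalues i)) :
    fc f hH = fc g hH := by
  unfold fc
  congr 1
  congr 1
  apply congrArg diagonal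
  funext i
  simp [h i]

lemma fc_conjTranspose : (fc f hH)ᴴ = fc f hH := by
  have hd : star (diagonal (Complex.ofReal ∘ f ∘ hH.eigenvalues) : Matrix (Fin n) (Fin n) ℂ)
      = diagonal (Complex.ofReal ∘ f ∘ hH.eigenvalues) := by
    rw [Matrix.star_eq_conjTranspose, diagonal_conjTranspose]
    apply congrArg diagonal
    funext i
    simp [Pi.star_def]
  unfold fc
  simp [conjTranspose_mul, hd, ← Matrix.star_eq_conjTranspose, star_star, mul_assoc]

lemma fc_isHermitian : (fc f hH).IsHermitian := fc_conjTranspose hH f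

lemma fc_posSemidef (h : ∀ i, 0 ≤ f (hH.eigenvalues i)) : (fc f hH).PosSemidef := by
  have : (diagonal (RCLike.ofReal ∘ f ∘ hH.eigenvalues) :
      Matrix (Fin n) (Fin n) ℂ).PosSemidef := by
    refine posSemidef_diagonal_iff.mpr fun i => ?_
    rw [Function.comp_apply, RCLike.nonneg_iff]
    simpa using h i
  simpa [fc, Matrix.star_eq_conjTranspose] using
    this.mul_mul_conjTranspose_same (hH.eigenvectorUnitary : Matrix (Fin n) (Fin n) ℂ)

lemma fc_trace : (fc f hH).trace = Complex.ofReal (∑ i, f (hH.eigenvalues i)) := by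
  unfold fc
  rw [Matrix.trace_mul_cycle,
    Matrix.mem_unitaryGroup_iff'.mp (hH.eigenvectorUnitary).2, one_mul, trace_diagonal]
  push_cast
  rfl

lemma fc_id : fc (fun x => x) hH = H := by
  unfold fc
  exact hH.spectral_theorem.symm

lemma fc_one : fc (fun _ => 1) hH = 1 := by
  unfold fc
  have : (diagonal (RCLike.ofReal ∘ (fun _ => (1:ℝ)) ∘ hH.eigenvalues) :
      Matrix (Fin n) (Fin n) ℂ) = 1 := by
    rw [← diagonal_one]
    apply congrArg diagonal
    funext i
    simp
  rw [this, mul_one, Matrix.mem_unitaryGroup_iff.mp (hH.eigenvectorUnitary).2]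

lemma fc_add : fc f hH + fc g hH = fc (fun x => f x + g x) hH := by
  unfold fc
  rw [← add_mul, ← mul_add, diagonal_add]
  congr 1
  congr 1
  apply congrArg diagonal
  funext x
  simp

lemma fc_sub : fc f hH - fc g hH = fc (fun x => f x - g x) hH := by
  unfold fc
  rw [← sub_mul, ← mul_sub, diagonal_sub]
  congr 1
  congr 1
  apply congrArg diagonal
  funext x
  simp [sub_eq_add_neg]

end fcsec

section lemmas

lemma psqrt_eq_fc {A : Matrix (Fin n) (Fin n) ℂ} (hA : A.PosSemidef) :
    psqrt A = fc Real.sqrt hA.1 := by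
  rw [psqrt, dif_pos hA]
  rfl

open scoped MatrixOrder in
lemma psqrt_unique {A B : Matrix (Fin n) (Fin n) ℂ} (hA : A.PosSemidef) (hB : B.PosSemidef)
    (h : B ^ 2 = A) : psqrt A = B := by
  rw [psqrt_eq_fc hA]
  have e : fc Real.sqrt hA.1 = cfc Real.sqrt A := by
    rw [hA.1.cfc_eq, IsHermitian.cfc, Unitary.conjStarAlgAut_apply]; rfl
  rw [e, ← cfcₙ_eq_cfc, ← CFC.sqrt_eq_real_sqrt A hA.nonneg]
  exact CFC.sqrt_unique (by rw [← h, pow_two]) hB.nonneg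

lemma psqrt_posSemidef {A : Matrix (Fin n) (Fin n) ℂ} (hA : A.PosSemidef) :
    (psqrt A).PosSemidef := by
  rw [psqrt_eq_fc hA]; exact fc_posSemidef _ _ (fun i => Real.sqrt_nonneg _)

lemma psqrt_mul_self {A : Matrix (Fin n) (Fin n) ℂ} (hA : A.PosSemidef) :
    psqrt A * psqrt A = A := by
  rw [psqrt_eq_fc hA, fc_mul,
    fc_congr hA.1 (f := fun x => Real.sqrt x * Real.sqrt x) (g := fun x => x)
      (fun i => Real.mul_self_sqrt (hA.eigenvalues_nonneg i)), fc_id]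

lemma herm_trace_eq {H : Matrix (Fin n) (Fin n) ℂ} (hH : H.IsHermitian) :
    H.trace = Complex.ofReal (∑ i, hH.eigenvalues i) := by
  conv_lhs => rw [← fc_id hH]
  rw [fc_trace]

lemma psd_trace_re_nonneg {A : Matrix (Fin n) (Fin n) ℂ} (hA : A.PosSemidef) :
    0 ≤ A.trace.re := by
  rw [herm_trace_eq hA.1, Complex.ofReal_re]
  exact Finset.sum_nonneg fun i _ => hA.eigenvalues_nonneg i

lemma psd_trace_mul_re_nonneg {A B : Matrix (Fin n) (Fin n) ℂ}
    (hA : A.PosSemidef) (hB : B.PosSemidef) : 0 ≤ ((A * B).trace).re := by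
  have h1 : (A * B).trace = (psqrt A * B * psqrt A).trace := by
    conv_lhs => rw [← psqrt_mul_self hA]
    rw [mul_assoc, Matrix.trace_mul_comm]
  have h3 : (psqrt A * B * psqrt A).PosSemidef := by
    have h4 := hB.conjTranspose_mul_mul_same (psqrt A)
    rwa [show (psqrt A)ᴴ = psqrt A from (psqrt_posSemidef hA).1] at h4
  rw [h1]
  exact psd_trace_re_nonneg h3

lemma trace_sq_eq (B : Matrix (Fin n) (Fin n) ℂ) :
    ((Bᴴ * B).trace).re = ∑ p : Fin n × Fin n, ‖B p.1 p.2‖ ^ 2 := by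
  have h : (Bᴴ * B).trace = ∑ p : Fin n × Fin n, (starRingEnd ℂ) (B p.1 p.2) * B p.1 p.2 := by
    rw [Fintype.sum_prod_type_right]
    simp only [Matrix.trace, Matrix.diag, Matrix.mul_apply, Matrix.conjTranspose_apply,
      Complex.star_def]
  rw [h, Complex.re_sum]
  refine Finset.sum_congr rfl fun p _ => ?_
  rw [RCLike.conj_mul]
  norm_cast

lemma trace_cs (B C : Matrix (Fin n) (Fin n) ℂ) :
    ‖(Bᴴ * C).trace‖ ≤ Real.sqrt ((Bᴴ * B).trace.re) * Real.sqrt ((Cᴴ * C).trace.re) := by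
  let x : EuclideanSpace ℂ (Fin n × Fin n) := WithLp.toLp 2 (fun p : Fin n × Fin n => B p.1 p.2)
  let y : EuclideanSpace ℂ (Fin n × Fin n) := WithLp.toLp 2 (fun p : Fin n × Fin n => C p.1 p.2)
  have hxy : (Bᴴ * C).trace = inner (𝕜 := ℂ) x y := by
    simp only [PiLp.inner_apply, RCLike.inner_apply, x, y, PiLp.toLp_apply]
    rw [Fintype.sum_prod_type_right]
    simp only [Matrix.trace, Matrix.diag, Matrix.mul_apply, Matrix.conjTranspose_apply,
      Complex.star_def]
    exact Finset.sum_congr rfl fun i _ => Finset.sum_congr rfl fun j _ => mul_comm _ _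
  have hx : ‖x‖ = Real.sqrt ((Bᴴ * B).trace.re) := by
    rw [EuclideanSpace.norm_eq, trace_sq_eq]
  have hy : ‖y‖ = Real.sqrt ((Cᴴ * C).trace.re) := by
    rw [EuclideanSpace.norm_eq, trace_sq_eq]
  rw [hxy, ← hx, ← hy]
  exact norm_inner_le_norm x y

end lemmas

section herm

lemma real_max_sub (x : ℝ) : max x 0 - max (-x) 0 = x := by
  rcases le_total 0 x with h | h
  · rw [max_eq_left h, max_eq_right (by linarith)]; ring
  · rw [max_eq_right h, max_eq_left (by linarith)]; ring

lemma real_max_add (x : ℝ) : max x 0 + max (-x) 0 = |x| := by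
  rcases le_total 0 x with h | h
  · rw [max_eq_left h, max_eq_right (by linarith), abs_of_nonneg h]; ring
  · rw [max_eq_right h, max_eq_left (by linarith), abs_of_nonpos h]; ring

variable {H : Matrix (Fin n) (Fin n) ℂ} (hH : H.IsHermitian)

lemma traceNorm_herm : traceNorm H = ∑ i, |hH.eigenvalues i| := by
  have habs : (fc (fun x => |x|) hH).PosSemidef := fc_posSemidef _ _ (fun i => abs_nonneg _)
  have hsq : (fc (fun x => |x|) hH) ^ 2 = Hᴴ * H := by
    rw [pow_two, fc_mul, fc_congr hH (g := fun x => x * x) (fun i => abs_mul_abs_self _),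
      ← fc_mul, fc_id, hH.eq]
  have h2 : psqrt (Hᴴ * H) = fc (fun x => |x|) hH := by
    exact psqrt_unique (posSemidef_conjTranspose_mul_self H) habs hsq
  rw [traceNorm, h2, fc_trace, Complex.ofReal_re]

include hH in
lemma trace_mul_le_traceNorm {V : Matrix (Fin n) (Fin n) ℂ}
    (h1 : (1 - V).PosSemidef) (h2 : (1 + V).PosSemidef) :
    ((H * V).trace).re ≤ traceNorm H := by
  set Hp := fc (fun x => max x 0) hH with hHp
  set Hm := fc (fun x => max (-x) 0) hH with hHm
  have hHpPSD : Hp.PosSemidef := fc_posSemidef _ _ (fun i => le_max_right _ _)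
  have hHmPSD : Hm.PosSemidef := fc_posSemidef _ _ (fun i => le_max_right _ _)
  have hsplit : H = Hp - Hm := by
    rw [hHp, hHm, fc_sub, fc_congr hH (g := fun x => x) (fun i => real_max_sub _), fc_id]
  have e1 : 0 ≤ ((Hp * (1 - V)).trace).re := psd_trace_mul_re_nonneg hHpPSD h1
  have e2 : 0 ≤ ((Hm * (1 + V)).trace).re := psd_trace_mul_re_nonneg hHmPSD h2
  have tn : traceNorm H = Hp.trace.re + Hm.trace.re := by
    rw [traceNorm_herm hH, hHp, hHm, fc_trace, fc_trace, Complex.ofReal_re, Complex.ofReal_re,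
      ← Finset.sum_add_distrib]
    exact Finset.sum_congr rfl fun i _ => (real_max_add _).symm
  have expand : ((H * V).trace).re = ((Hp * V).trace).re - ((Hm * V).trace).re := by
    rw [hsplit, sub_mul, Matrix.trace_sub, Complex.sub_re]
  have f1 : ((Hp * (1 - V)).trace).re = Hp.trace.re - ((Hp * V).trace).re := by
    rw [mul_sub, mul_one, Matrix.trace_sub, Complex.sub_re]
  have f2 : ((Hm * (1 + V)).trace).re = Hm.trace.re + ((Hm * V).trace).re := by
    rw [mul_add, mul_one, Matrix.trace_add, Complex.add_re]
  rw [expand, tn]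
  rw [f1] at e1
  rw [f2] at e2
  linarith

end herm

section polar

variable {n : ℕ} (X : Matrix (Fin n) (Fin n) ℂ)

lemma hermXX : (Xᴴ * X).IsHermitian := (posSemidef_conjTranspose_mul_self X).1

/-- absolute value |X| -/
noncomputable def pM : Matrix (Fin n) (Fin n) ℂ := fc Real.sqrt (hermXX X)

/-- partial isometry factor of the polar decomposition -/
noncomputable def pW : Matrix (Fin n) (Fin n) ℂ :=
  X * fc (fun x => (Real.sqrt x)⁻¹) (hermXX X)

/-- support projection of |X| -/
noncomputable def pP : Matrix (Fin n) (Fin n) ℂ :=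
  fc (fun x => if x = 0 then 0 else 1) (hermXX X)

lemma ev_nonneg (i : Fin n) : 0 ≤ (hermXX X).eigenvalues i :=
  (posSemidef_conjTranspose_mul_self X).eigenvalues_nonneg i

lemma pM_psd : (pM X).PosSemidef := fc_posSemidef _ _ (fun i => Real.sqrt_nonneg _)

lemma traceNorm_eq_pM : traceNorm X = ((pM X).trace).re := by
  rw [traceNorm, psqrt_eq_fc (posSemidef_conjTranspose_mul_self X), pM]

lemma traceNorm_nonneg : 0 ≤ traceNorm X := by
  rw [traceNorm_eq_pM]
  exact psd_trace_re_nonneg (pM_psd X)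

lemma pWH_mul_W : (pW X)ᴴ * pW X = pP X := by
  rw [pW, conjTranspose_mul, fc_conjTranspose]
  have assoc : fc (fun x => (Real.sqrt x)⁻¹) (hermXX X) * Xᴴ *
      (X * fc (fun x => (Real.sqrt x)⁻¹) (hermXX X)) =
      fc (fun x => (Real.sqrt x)⁻¹) (hermXX X) * ((Xᴴ * X) *
        fc (fun x => (Real.sqrt x)⁻¹) (hermXX X)) := by noncomm_ring
  rw [assoc]
  have key : fc (fun x => (Real.sqrt x)⁻¹) (hermXX X) * (fc (fun x => x) (hermXX X) *
      fc (fun x => (Real.sqrt x)⁻¹) (hermXX X)) = pP X := by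
    rw [fc_mul, fc_mul, pP]
    refine fc_congr _ fun i => ?_
    have ht := ev_nonneg X i
    set t := (hermXX X).eigenvalues i
    by_cases h : t = 0
    · simp [h]
    · have hs : Real.sqrt t ≠ 0 := by
        simp [Real.sqrt_ne_zero', lt_of_le_of_ne ht (Ne.symm h)]
      rw [if_neg h]
      rw [show t = Real.sqrt t * Real.sqrt t from (Real.mul_self_sqrt ht).symm]
      field_simp
      rw [Real.sqrt_sq (Real.sqrt_nonneg _)]
  rw [← key, fc_id]

lemma pP_psd : (pP X).PosSemidef :=
  fc_posSemidef _ _ (fun i => by split <;> norm_num)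

lemma one_sub_pP : (1 : Matrix (Fin n) (Fin n) ℂ) - pP X =
    fc (fun x => 1 - (if x = 0 then 0 else 1)) (hermXX X) := by
  rw [← fc_sub, fc_one]
  rfl

lemma one_sub_pP_psd : ((1 : Matrix (Fin n) (Fin n) ℂ) - pP X).PosSemidef := by
  rw [one_sub_pP]
  exact fc_posSemidef _ _ (fun i => by norm_num; split <;> norm_num)

lemma X_mul_supp : X * pP X = X := by
  have hkey : (X * (1 - pP X))ᴴ * (X * (1 - pP X)) = 0 := by
    have h1 : (1 - pP X)ᴴ = 1 - pP X := by
      rw [conjTranspose_sub, conjTranspose_one, pP, fc_conjTranspose]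
    rw [conjTranspose_mul, h1]
    have assoc : (1 - pP X) * Xᴴ * (X * (1 - pP X)) =
        (1 - pP X) * ((Xᴴ * X) * (1 - pP X)) := by noncomm_ring
    rw [assoc, one_sub_pP]
    have key : fc (fun x => 1 - (if x = 0 then 0 else 1)) (hermXX X) * (fc (fun x => x) (hermXX X)
        * fc (fun x => 1 - (if x = 0 then 0 else 1)) (hermXX X)) = 0 := by
      rw [fc_mul, fc_mul]
      have zero_fn : fc (fun _ => (0:ℝ)) (hermXX X) = 0 := by
        unfold fc
        have : (diagonal (RCLike.ofReal ∘ (fun _ => (0:ℝ)) ∘ (hermXX X).eigenvalues) :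
            Matrix (Fin n) (Fin n) ℂ) = 0 := by
          rw [← diagonal_zero]
          apply congrArg diagonal
          funext i
          simp
        rw [this, mul_zero, zero_mul]
      rw [← zero_fn]
      refine fc_congr _ fun i => ?_
      by_cases h : (hermXX X).eigenvalues i = 0 <;> simp [h]
    rw [← key, fc_id]
  have := conjTranspose_mul_self_eq_zero.mp hkey
  have h2 : X - X * pP X = 0 := by rwa [mul_sub, mul_one] at this
  exact (sub_eq_zero.mp h2).symm

lemma pW_mul_pM : pW X * pM X = X := by
  rw [pW, pM, mul_assoc, fc_mul]
  have : fc (fun x => (Real.sqrt x)⁻¹ * Real.sqrt x) (hermXX X) = pP X := by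
    rw [pP]
    refine fc_congr _ fun i => ?_
    have ht := ev_nonneg X i
    by_cases h : (hermXX X).eigenvalues i = 0
    · simp [h]
    · have hs : Real.sqrt ((hermXX X).eigenvalues i) ≠ 0 := by
        simp [Real.sqrt_ne_zero', lt_of_le_of_ne ht (Ne.symm h)]
      rw [if_neg h, inv_mul_cancel₀ hs]
  rw [this, X_mul_supp]

lemma pWH_mul_X : (pW X)ᴴ * X = pM X := by
  rw [pW, conjTranspose_mul, fc_conjTranspose, mul_assoc]
  have key : fc (fun x => (Real.sqrt x)⁻¹) (hermXX X) * fc (fun x => x) (hermXX X) = pM X := by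
    rw [fc_mul, pM]
    refine fc_congr _ fun i => ?_
    have ht := ev_nonneg X i
    by_cases h : (hermXX X).eigenvalues i = 0
    · simp [h]
    · have hs : Real.sqrt ((hermXX X).eigenvalues i) ≠ 0 := by
        simp [Real.sqrt_ne_zero', lt_of_le_of_ne ht (Ne.symm h)]
      rw [show (hermXX X).eigenvalues i =
        Real.sqrt ((hermXX X).eigenvalues i) * Real.sqrt ((hermXX X).eigenvalues i) from
        (Real.mul_self_sqrt ht).symm]
      field_simp
      rw [Real.sqrt_sq (Real.sqrt_nonneg _)]
  rw [← key, fc_id]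

lemma pW_mul_supp : pW X * pP X = pW X := by
  rw [pW, pP, mul_assoc, fc_mul]
  congr 1
  refine fc_congr _ fun i => ?_
  by_cases h : (hermXX X).eigenvalues i = 0 <;> simp [h]

lemma one_sub_WWH_psd : ((1 : Matrix (Fin n) (Fin n) ℂ) - pW X * (pW X)ᴴ).PosSemidef := by
  set Q := pW X * (pW X)ᴴ with hQ
  have hherm : Qᴴ = Q := by rw [hQ, conjTranspose_mul, conjTranspose_conjTranspose]
  have hidem : Q * Q = Q := by
    rw [hQ]
    have : pW X * (pW X)ᴴ * (pW X * (pW X)ᴴ) = pW X * ((pW X)ᴴ * pW X) * (pW X)ᴴ := by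
      noncomm_ring
    rw [this, pWH_mul_W, pW_mul_supp]
  have h1 : ((1 : Matrix (Fin n) (Fin n) ℂ) - Q)ᴴ = 1 - Q := by
    rw [conjTranspose_sub, conjTranspose_one, hherm]
  have h2 : ((1 : Matrix (Fin n) (Fin n) ℂ) - Q)ᴴ * (1 - Q) = 1 - Q := by
    rw [h1, mul_sub, mul_one, sub_mul, one_mul, hidem]
    noncomm_ring
  have := posSemidef_conjTranspose_mul_self ((1 : Matrix (Fin n) (Fin n) ℂ) - Q)
  rwa [h2] at this

lemma norm_trace_le_traceNorm : ‖X.trace‖ ≤ traceNorm X := by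
  set nrt := fc (fun x => Real.sqrt (Real.sqrt x)) (hermXX X) with hnrt
  have hnh : nrtᴴ = nrt := by rw [hnrt, fc_conjTranspose]
  have hmm : nrt * nrt = pM X := by
    rw [hnrt, fc_mul, pM]
    exact fc_congr _ fun i => Real.mul_self_sqrt (Real.sqrt_nonneg _)
  have hX : X = pW X * nrt * nrt := by rw [mul_assoc, hmm, pW_mul_pM]
  have htr : X.trace = (((pW X)ᴴ * nrt)ᴴ * nrt).trace := by
    conv_lhs => rw [hX]
    rw [Matrix.trace_mul_comm, conjTranspose_mul, conjTranspose_conjTranspose, hnh, ← mul_assoc]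
  have hBB : ((((pW X)ᴴ * nrt)ᴴ * ((pW X)ᴴ * nrt)).trace).re ≤ ((pM X).trace).re := by
    have expand : (((pW X)ᴴ * nrt)ᴴ * ((pW X)ᴴ * nrt)) =
        nrt * nrt - nrt * (1 - pW X * (pW X)ᴴ) * nrt := by
      rw [conjTranspose_mul, conjTranspose_conjTranspose, hnh]
      noncomm_ring
    have hpsd : (nrt * (1 - pW X * (pW X)ᴴ) * nrt).PosSemidef := by
      have := (one_sub_WWH_psd X).conjTranspose_mul_mul_same nrt
      rwa [hnh] at this
    rw [expand, Matrix.trace_sub, Complex.sub_re, hmm]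
    have := psd_trace_re_nonneg hpsd
    linarith
  have hCC : ((nrtᴴ * nrt).trace).re = ((pM X).trace).re := by rw [hnh, hmm]
  have cs := trace_cs ((pW X)ᴴ * nrt) nrt
  rw [← htr, hCC] at cs
  have h0 : 0 ≤ ((pM X).trace).re := psd_trace_re_nonneg (pM_psd X)
  calc ‖X.trace‖ ≤ Real.sqrt ((((pW X)ᴴ * nrt)ᴴ * ((pW X)ᴴ * nrt)).trace).re *
        Real.sqrt ((pM X).trace).re := cs
    _ ≤ Real.sqrt ((pM X).trace).re * Real.sqrt ((pM X).trace).re :=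
        mul_le_mul_of_nonneg_right (Real.sqrt_le_sqrt hBB) (Real.sqrt_nonneg _)
    _ = ((pM X).trace).re := Real.mul_self_sqrt h0
    _ = traceNorm X := (traceNorm_eq_pM X).symm

lemma re_trace_le_traceNorm : X.trace.re ≤ traceNorm X :=
  le_trans (Complex.re_le_norm _) (norm_trace_le_traceNorm X)

end polar

section main

variable {n : ℕ}

lemma fc_trace_re {H : Matrix (Fin n) (Fin n) ℂ} (hH : H.IsHermitian) (f : ℝ → ℝ) :
    ((fc f hH).trace).re = ∑ i, f (hH.eigenvalues i) := by
  rw [fc_trace, Complex.ofReal_re]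

lemma sgn_mul (x : ℝ) : (if 0 ≤ x then (1:ℝ) else -1) * x = max x 0 + max (-x) 0 := by
  by_cases h : 0 ≤ x
  · rw [if_pos h, max_eq_left h, max_eq_right (neg_nonpos.mpr h)]; ring
  · push_neg at h
    rw [if_neg (not_le.mpr h), max_eq_right h.le, max_eq_left (neg_nonneg.mpr h.le)]; ring

lemma lower_bound (ρ ξ : Matrix (Fin n) (Fin n) ℂ)
    (hρ : ρ.PosSemidef) (hξ : ξ.PosSemidef) (hρ1 : ρ.trace = 1) (hξ1 : ξ.trace = 1) :
    1 - (1 / 2) * traceNorm (ρ - ξ) ≤ fid ρ ξ := by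
  set C := psqrt ρ with hCdef
  set D := psqrt ξ with hDdef
  have hC : C.PosSemidef := psqrt_posSemidef hρ
  have hD : D.PosSemidef := psqrt_posSemidef hξ
  have hCC : C * C = ρ := psqrt_mul_self hρ
  have hDD : D * D = ξ := psqrt_mul_self hξ
  set R := C - D with hRdef
  set K := C + D with hKdef
  have hR : R.IsHermitian := hC.1.sub hD.1
  have hΔ : (ρ - ξ).IsHermitian := hρ.1.sub hξ.1
  set Rp := fc (fun x => max x 0) hR with hRpdef
  set Rm := fc (fun x => max (-x) 0) hR with hRmdef
  set V := fc (fun x => if 0 ≤ x then (1:ℝ) else -1) hR with hVdef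
  have hRpPSD : Rp.PosSemidef := fc_posSemidef _ _ fun i => le_max_right _ _
  have hRmPSD : Rm.PosSemidef := fc_posSemidef _ _ fun i => le_max_right _ _
  have h1V : ((1 : Matrix (Fin n) (Fin n) ℂ) - V).PosSemidef := by
    rw [hVdef, ← fc_one hR, fc_sub]
    exact fc_posSemidef _ _ fun i => by by_cases hx : 0 ≤ hR.eigenvalues i <;> simp [hx]
  have h2V : ((1 : Matrix (Fin n) (Fin n) ℂ) + V).PosSemidef := by
    rw [hVdef, ← fc_one hR, fc_add]
    exact fc_posSemidef _ _ fun i => by by_cases hx : 0 ≤ hR.eigenvalues i <;> simp [hx]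
  -- key1 : duality bound
  have key1 : (((ρ - ξ) * V).trace).re ≤ traceNorm (ρ - ξ) :=
    trace_mul_le_traceNorm hΔ h1V h2V
  -- identify V * R and R * V with |R|
  have habs : V * R = Rp + Rm := by
    have h := fc_mul hR (fun x => if 0 ≤ x then (1:ℝ) else -1) (fun x => x)
    rw [fc_id] at h
    rw [hVdef, h, hRpdef, hRmdef, fc_add]
    exact fc_congr _ fun i => sgn_mul _
  have habs' : R * V = Rp + Rm := by
    have h := fc_mul hR (fun x => x) (fun x => if 0 ≤ x then (1:ℝ) else -1)
    rw [fc_id] at h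
    rw [hVdef, h, hRpdef, hRmdef, fc_add]
    exact fc_congr _ fun i => by rw [mul_comm]; exact sgn_mul _
  -- 2 (ρ - ξ) = R K + K R
  have hsum : R * K + K * R = (ρ - ξ) + (ρ - ξ) := by
    rw [hRdef, hKdef, ← hCC, ← hDD]
    noncomm_ring
  -- trace identity : 2 tr(ΔV) = 2 tr((Rp+Rm) K)
  have htr : (((ρ - ξ) * V).trace) + (((ρ - ξ) * V).trace)
      = ((Rp + Rm) * K).trace + ((Rp + Rm) * K).trace := by
    have h0 : ((R * K + K * R) * V).trace = (((ρ - ξ) + (ρ - ξ)) * V).trace := by rw [hsum]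
    rw [add_mul (R * K) (K * R) V, Matrix.trace_add,
      add_mul (ρ - ξ) (ρ - ξ) V, Matrix.trace_add] at h0
    have c1 : (R * K * V).trace = ((Rp + Rm) * K).trace := by
      rw [Matrix.trace_mul_cycle, habs]
    have c2 : (K * R * V).trace = ((Rp + Rm) * K).trace := by
      rw [mul_assoc, habs', Matrix.trace_mul_comm]
    rw [c1, c2] at h0
    exact h0.symm
  -- lower bounds for tr(Rp K) and tr(Rm K)
  have hKR : K - R = D + D := by rw [hRdef, hKdef]; abel
  have hKR' : K + R = C + C := by rw [hRdef, hKdef]; abel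
  have b1 : ((Rp * R).trace).re ≤ ((Rp * K).trace).re := by
    have h0 : 0 ≤ ((Rp * (D + D)).trace).re :=
      psd_trace_mul_re_nonneg hRpPSD (hD.add hD)
    rw [← hKR, mul_sub, Matrix.trace_sub, Complex.sub_re] at h0
    linarith
  have b2 : -((Rm * R).trace).re ≤ ((Rm * K).trace).re := by
    have h0 : 0 ≤ ((Rm * (C + C)).trace).re :=
      psd_trace_mul_re_nonneg hRmPSD (hC.add hC)
    rw [← hKR', mul_add, Matrix.trace_add, Complex.add_re] at h0
    linarith
  -- identify tr(Rp R) and tr(Rm R) as sums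
  have s1 : ((Rp * R).trace).re = ∑ i, max (hR.eigenvalues i) 0 * hR.eigenvalues i := by
    have h := fc_mul hR (fun x => max x 0) (fun x => x)
    rw [fc_id] at h
    rw [hRpdef, h, fc_trace_re]
  have s2 : ((Rm * R).trace).re = ∑ i, max (-hR.eigenvalues i) 0 * hR.eigenvalues i := by
    have h := fc_mul hR (fun x => max (-x) 0) (fun x => x)
    rw [fc_id] at h
    rw [hRmdef, h, fc_trace_re]
  have s3 : ((Rp * R).trace).re - ((Rm * R).trace).re = ∑ i, hR.eigenvalues i ^ 2 := by
    rw [s1, s2, ← Finset.sum_sub_distrib]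
    refine Finset.sum_congr rfl fun i _ => ?_
    rw [← sub_mul, real_max_sub]
    ring
  -- tr(R ^ 2) = 2 - 2 Re tr(C D)
  have hRR : R * R = C * C - C * D - D * C + D * D := by rw [hRdef]; noncomm_ring
  have hRRtr : ((R * R).trace).re = 2 - 2 * ((C * D).trace).re := by
    rw [hRR, hCC, hDD, Matrix.trace_add, Matrix.trace_sub, Matrix.trace_sub, hρ1, hξ1,
      Matrix.trace_mul_comm D C]
    simp only [Complex.add_re, Complex.sub_re, Complex.one_re]
    ring
  have hRRsum : ((R * R).trace).re = ∑ i, hR.eigenvalues i ^ 2 := by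
    have h := fc_mul hR (fun x => x) (fun x => x)
    rw [fc_id] at h
    rw [h, fc_trace_re]
    exact Finset.sum_congr rfl fun i _ => (pow_two _).symm
  -- Re tr(C D) ≤ fid
  have hfid : ((C * D).trace).re ≤ fid ρ ξ := re_trace_le_traceNorm (C * D)
  -- assemble
  have hΔV : (((ρ - ξ) * V).trace).re = (((Rp + Rm) * K).trace).re := by
    have := congrArg Complex.re htr
    simp only [Complex.add_re] at this
    linarith
  have hsplit2 : (((Rp + Rm) * K).trace).re = ((Rp * K).trace).re + ((Rm * K).trace).re := by
    rw [add_mul, Matrix.trace_add, Complex.add_re]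
  have chain : 2 - 2 * ((C * D).trace).re ≤ traceNorm (ρ - ξ) := by
    rw [← hRRtr, hRRsum, ← s3]
    calc ((Rp * R).trace).re - ((Rm * R).trace).re
        ≤ ((Rp * K).trace).re + ((Rm * K).trace).re := by linarith
      _ = (((ρ - ξ) * V).trace).re := by rw [hΔV, hsplit2]
      _ ≤ traceNorm (ρ - ξ) := key1
  have : fid ρ ξ = traceNorm (C * D) := rfl
  linarith
lemma fvdg_arith {p q : ℝ} (hp0 : 0 ≤ p) (hq0 : 0 ≤ q) (hp1 : p ≤ 1) (hq1 : q ≤ 1) :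
    Real.sqrt q * Real.sqrt p + Real.sqrt (1 - q) * Real.sqrt (1 - p) ≤
      Real.sqrt (1 - (p - q) ^ 2) := by
  set a := Real.sqrt p with hadef
  set b := Real.sqrt q with hbdef
  set c := Real.sqrt (1 - p) with hcdef
  set d := Real.sqrt (1 - q) with hddef
  have ha2 : a ^ 2 = p := Real.sq_sqrt hp0
  have hb2' : b ^ 2 = q := Real.sq_sqrt hq0
  have hc2 : c ^ 2 = 1 - p := Real.sq_sqrt (by linarith)
  have hd2 : d ^ 2 = 1 - q := Real.sq_sqrt (by linarith)
  have ha0 : 0 ≤ a := Real.sqrt_nonneg _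
  have hb0 : 0 ≤ b := Real.sqrt_nonneg _
  have hc0 : 0 ≤ c := Real.sqrt_nonneg _
  have hd0 : 0 ≤ d := Real.sqrt_nonneg _
  have hy : 0 ≤ 1 - (p - q) ^ 2 := by nlinarith
  rw [Real.le_sqrt (by positivity) hy]
  nlinarith [sq_nonneg (a * c - b * d), sq_nonneg (a * b - c * d)]

lemma upper_bound (ρ ξ : Matrix (Fin n) (Fin n) ℂ)
    (hρ : ρ.PosSemidef) (hξ : ξ.PosSemidef) (hρ1 : ρ.trace = 1) (hξ1 : ξ.trace = 1) :
    fid ρ ξ ≤ Real.sqrt (1 - (1 / 4) * (traceNorm (ρ - ξ)) ^ 2) := by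
  set C := psqrt ρ with hCdef
  set D := psqrt ξ with hDdef
  have hC : C.PosSemidef := psqrt_posSemidef hρ
  have hD : D.PosSemidef := psqrt_posSemidef hξ
  have hCC : C * C = ρ := psqrt_mul_self hρ
  have hDD : D * D = ξ := psqrt_mul_self hξ
  set A := C * D with hAdef
  set W := pW A with hWdef
  have hΔ : (ρ - ξ).IsHermitian := hρ.1.sub hξ.1
  set P := fc (fun x => if 0 ≤ x then (1:ℝ) else 0) hΔ with hPdef
  have hPH : Pᴴ = P := by rw [hPdef]; exact fc_conjTranspose _ _
  have hPP : P * P = P := by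
    rw [hPdef, fc_mul]
    exact fc_congr _ fun i => by by_cases hx : 0 ≤ hΔ.eigenvalues i <;> simp [hx]
  have hPpsd : P.PosSemidef := fc_posSemidef _ _ fun i => by
    by_cases hx : 0 ≤ hΔ.eigenvalues i <;> simp [hx]
  have h1P : ((1 : Matrix (Fin n) (Fin n) ℂ) - P).PosSemidef := by
    rw [hPdef, ← fc_one hΔ, fc_sub]
    exact fc_posSemidef _ _ fun i => by by_cases hx : 0 ≤ hΔ.eigenvalues i <;> simp [hx]
  have h1PH : ((1 : Matrix (Fin n) (Fin n) ℂ) - P)ᴴ = 1 - P := by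
    rw [conjTranspose_sub, conjTranspose_one, hPH]
  have h1PP : ((1 : Matrix (Fin n) (Fin n) ℂ) - P) * (1 - P) = 1 - P := by
    rw [mul_sub, mul_one, sub_mul, one_mul, hPP]
    abel
  -- the generic term bound
  have bound : ∀ E : Matrix (Fin n) (Fin n) ℂ, Eᴴ = E → E * E = E → E.PosSemidef →
      ((D * Wᴴ * C * E).trace).re ≤
        Real.sqrt ((ξ * E).trace).re * Real.sqrt ((ρ * E).trace).re := by
    intro E hEH hEE hEpsd
    have htr0 : (D * Wᴴ * C * E).trace = ((W * (D * E))ᴴ * (C * E)).trace := by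
      have h1 : (W * (D * E))ᴴ = E * D * Wᴴ := by
        rw [conjTranspose_mul, conjTranspose_mul, hEH, show Dᴴ = D from hD.1]
      have e1 : E * D * Wᴴ * (C * E) = (E * (D * Wᴴ * C)) * E := by noncomm_ring
      rw [h1, e1, Matrix.trace_mul_comm (E * (D * Wᴴ * C)) E, ← mul_assoc, hEE,
        Matrix.trace_mul_comm E (D * Wᴴ * C)]
    have cs := trace_cs (W * (D * E)) (C * E)
    -- right factor
    have hr : (((C * E)ᴴ * (C * E)).trace) = ((ρ * E).trace) := by
      rw [conjTranspose_mul, hEH, show Cᴴ = C from hC.1]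
      have h3 : E * C * (C * E) = E * ρ * E := by rw [← hCC]; noncomm_ring
      rw [h3, Matrix.trace_mul_cycle E ρ E, hEE, Matrix.trace_mul_comm E ρ]
    -- left factor
    have hl : (((W * (D * E))ᴴ * (W * (D * E))).trace).re ≤ ((ξ * E).trace).re := by
      have h4 : (W * (D * E))ᴴ * (W * (D * E)) = (D * E)ᴴ * (Wᴴ * W) * (D * E) := by
        rw [conjTranspose_mul]
        noncomm_ring
      have h5 : (D * E)ᴴ * ((1 : Matrix (Fin n) (Fin n) ℂ) - pP A) * (D * E) =
          (D * E)ᴴ * (D * E) - (D * E)ᴴ * (Wᴴ * W) * (D * E) := by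
        rw [hWdef, pWH_mul_W]
        noncomm_ring
      have h6 : ((D * E)ᴴ * ((1 : Matrix (Fin n) (Fin n) ℂ) - pP A) * (D * E)).PosSemidef :=
        (one_sub_pP_psd A).conjTranspose_mul_mul_same (D * E)
      have h7 : 0 ≤ (((D * E)ᴴ * (D * E)).trace).re - (((D * E)ᴴ * (Wᴴ * W) * (D * E)).trace).re := by
        have := psd_trace_re_nonneg h6
        rwa [h5, Matrix.trace_sub, Complex.sub_re] at this
      have h8 : (((D * E)ᴴ * (D * E)).trace) = ((ξ * E).trace) := by
        rw [conjTranspose_mul, hEH, show Dᴴ = D from hD.1]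
        have h9 : E * D * (D * E) = E * ξ * E := by rw [← hDD]; noncomm_ring
        rw [h9, Matrix.trace_mul_cycle E ξ E, hEE, Matrix.trace_mul_comm E ξ]
      rw [h4]
      rw [h8] at h7
      linarith
    have hρE : 0 ≤ ((ρ * E).trace).re := psd_trace_mul_re_nonneg hρ hEpsd
    have hξE : 0 ≤ ((ξ * E).trace).re := psd_trace_mul_re_nonneg hξ hEpsd
    calc ((D * Wᴴ * C * E).trace).re
        ≤ ‖(D * Wᴴ * C * E).trace‖ := Complex.re_le_norm _
      _ = ‖((W * (D * E))ᴴ * (C * E)).trace‖ := by rw [htr0]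
      _ ≤ Real.sqrt (((W * (D * E))ᴴ * (W * (D * E))).trace).re *
            Real.sqrt (((C * E)ᴴ * (C * E)).trace).re := cs
      _ ≤ Real.sqrt ((ξ * E).trace).re * Real.sqrt ((ρ * E).trace).re := by
          rw [hr]
          exact mul_le_mul_of_nonneg_right (Real.sqrt_le_sqrt hl) (Real.sqrt_nonneg _)
  -- express fid as the split trace
  have hfid : fid ρ ξ = ((D * Wᴴ * C * P).trace).re + ((D * Wᴴ * C * (1 - P)).trace).re := by
    have h1 : fid ρ ξ = ((pM A).trace).re := by
      rw [fid, ← hCdef, ← hDdef, ← hAdef, traceNorm_eq_pM]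
    have h2 : (pM A).trace = (D * Wᴴ * C).trace := by
      rw [← pWH_mul_X A, ← hWdef, hAdef, ← mul_assoc, Matrix.trace_mul_cycle]
    have h3 : (D * Wᴴ * C).trace = (D * Wᴴ * C * P).trace + (D * Wᴴ * C * (1 - P)).trace := by
      rw [← Matrix.trace_add, ← mul_add, add_sub_cancel, mul_one]
    rw [h1, h2, h3, Complex.add_re]
  have hp0 : 0 ≤ ((ρ * P).trace).re := psd_trace_mul_re_nonneg hρ hPpsd
  have hq0 : 0 ≤ ((ξ * P).trace).re := psd_trace_mul_re_nonneg hξ hPpsd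
  have hρtr : ρ.trace.re = 1 := by rw [hρ1]; rfl
  have hξtr : ξ.trace.re = 1 := by rw [hξ1]; rfl
  have hp1 : ((ρ * (1 - P)).trace).re = 1 - ((ρ * P).trace).re := by
    rw [mul_sub, mul_one, Matrix.trace_sub, Complex.sub_re, hρtr]
  have hq1 : ((ξ * (1 - P)).trace).re = 1 - ((ξ * P).trace).re := by
    rw [mul_sub, mul_one, Matrix.trace_sub, Complex.sub_re, hξtr]
  have hple : ((ρ * P).trace).re ≤ 1 := by
    have := psd_trace_mul_re_nonneg hρ h1P
    rw [hp1] at this; linarith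
  have hqle : ((ξ * P).trace).re ≤ 1 := by
    have := psd_trace_mul_re_nonneg hξ h1P
    rw [hq1] at this; linarith
  -- trace distance equals 2(p - q)
  have hT : traceNorm (ρ - ξ) = 2 * (((ρ * P).trace).re - ((ξ * P).trace).re) := by
    have hsum0 : ∑ i, hΔ.eigenvalues i = 0 := by
      have h0 : (ρ - ξ).trace = 0 := by rw [Matrix.trace_sub, hρ1, hξ1, sub_self]
      have h1 := herm_trace_eq hΔ
      rw [h0] at h1
      exact_mod_cast h1.symm
    have hpq : ((ρ * P).trace).re - ((ξ * P).trace).re = ∑ i, max (hΔ.eigenvalues i) 0 := by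
      have h2 : ((ρ - ξ) * P).trace = (ρ * P).trace - (ξ * P).trace := by
        rw [sub_mul, Matrix.trace_sub]
      have h3 := fc_mul hΔ (fun x => x) (fun x => if 0 ≤ x then (1:ℝ) else 0)
      rw [fc_id] at h3
      have h4 : ((ρ - ξ) * P).trace.re = ∑ i, max (hΔ.eigenvalues i) 0 := by
        rw [hPdef, h3, fc_trace_re]
        refine Finset.sum_congr rfl fun i _ => ?_
        by_cases hx : 0 ≤ hΔ.eigenvalues i
        · simp [hx, max_eq_left hx]
        · push_neg at hx
          simp [not_le.mpr hx, max_eq_right hx.le]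
      rw [← h4, h2, Complex.sub_re]
    rw [traceNorm_herm hΔ, hpq]
    have h5 : ∀ x : ℝ, |x| = 2 * max x 0 - x := by
      intro x
      rcases le_total 0 x with h | h
      · rw [abs_of_nonneg h, max_eq_left h]; ring
      · rw [abs_of_nonpos h, max_eq_right h]; ring
    calc ∑ i, |hΔ.eigenvalues i| = ∑ i, (2 * max (hΔ.eigenvalues i) 0 - hΔ.eigenvalues i) :=
          Finset.sum_congr rfl fun i _ => h5 _
      _ = 2 * (∑ i, max (hΔ.eigenvalues i) 0) - ∑ i, hΔ.eigenvalues i := by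
          rw [Finset.sum_sub_distrib, Finset.mul_sum]
      _ = 2 * (∑ i, max (hΔ.eigenvalues i) 0) := by rw [hsum0, sub_zero]
  -- put everything together
  have hb1 := bound P hPH hPP hPpsd
  have hb2 := bound (1 - P) h1PH h1PP h1P
  rw [hp1, hq1] at hb2
  have harg : 1 - (1 / 4) * (traceNorm (ρ - ξ)) ^ 2 =
      1 - (((ρ * P).trace).re - ((ξ * P).trace).re) ^ 2 := by
    rw [hT]; ring
  have hgoal := fvdg_arith hp0 hq0 hple hqle
  rw [harg]
  calc fid ρ ξ = ((D * Wᴴ * C * P).trace).re + ((D * Wᴴ * C * (1 - P)).trace).re := hfid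
    _ ≤ Real.sqrt ((ξ * P).trace).re * Real.sqrt ((ρ * P).trace).re +
        Real.sqrt (1 - ((ξ * P).trace).re) * Real.sqrt (1 - ((ρ * P).trace).re) :=
          add_le_add hb1 hb2
    _ ≤ Real.sqrt (1 - (((ρ * P).trace).re - ((ξ * P).trace).re) ^ 2) := hgoal

end main

end FvdG

/-- Fuchs–van de Graaf inequalities for density operators. -/
theorem stmt1 {n : ℕ} (ρ ξ : Matrix (Fin n) (Fin n) ℂ)
    (hρ : ρ.PosSemidef) (hξ : ξ.PosSemidef) (hρ1 : ρ.trace = 1) (hξ1 : ξ.trace = 1) :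
    1 - (1 / 2) * traceNorm (ρ - ξ) ≤ fid ρ ξ ∧
    fid ρ ξ ≤ Real.sqrt (1 - (1 / 4) * (traceNorm (ρ - ξ)) ^ 2) :=
  ⟨FvdG.lower_bound ρ ξ hρ hξ hρ1 hξ1, FvdG.upper_bound ρ ξ hρ hξ hρ1 hξ1⟩
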